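/- Let p > 1 be an integer and m a positive integer. In the game N^m_{p,k} (Nim with m coins and p-index k) where k = min(p, m+1), the Sprague-Grundy number of a position (x^1, ..., x^m) equals x^1 ⊕_p ⋯ ⊕_p x^m. -/

import Mathlib

/-- The `L`-th digit of `x` in base `p`. -/
def digit (p L x : ℕ) : ℕ := x / p ^ L % p

section DigitLemmas

variable {p : ℕ}

lemma digit_lt (hp : 1 < p) (L x : ℕ) : digit p L x < p :=
  Nat.mod_lt _ (by omega)

lemma digit_eq_zero (hp : 1 < p) {L x : ℕ} (h : x < p ^ L) : digit p L x = 0 := by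
  simp [digit, Nat.div_eq_of_lt h]

lemma lt_pow_self' (hp : 1 < p) {x L : ℕ} (h : x ≤ L) : x < p ^ L :=
  lt_of_le_of_lt h (Nat.lt_pow_self hp : L < p ^ L)

lemma digit_eq_zero_of_le (hp : 1 < p) {L x : ℕ} (h : x ≤ L) : digit p L x = 0 :=
  digit_eq_zero hp (lt_pow_self' hp h)

lemma mod_pow_succ' (hp : 1 < p) (x N : ℕ) :
    x % p ^ (N + 1) = x % p ^ N + digit p N x * p ^ N := by
  have hpN : 0 < p ^ N := pow_pos (by omega) _
  have e3 : x / p ^ N / p = x / p ^ (N + 1) := by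
    rw [Nat.div_div_eq_div_mul, ← pow_succ]
  have h1 : x = p ^ (N + 1) * (x / p ^ (N + 1)) + (x % p ^ N + digit p N x * p ^ N) :=
    calc x = p ^ N * (x / p ^ N) + x % p ^ N := (Nat.div_add_mod _ _).symm
    _ = p ^ N * (p * (x / p ^ N / p) + x / p ^ N % p) + x % p ^ N := by
        rw [Nat.div_add_mod (x / p ^ N) p]
    _ = p ^ N * p * (x / p ^ N / p) + (x % p ^ N + (x / p ^ N % p) * p ^ N) := by ring
    _ = p ^ (N + 1) * (x / p ^ (N + 1)) + (x % p ^ N + digit p N x * p ^ N) := by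
        rw [e3, ← pow_succ, digit]
  have h2 : x % p ^ N + digit p N x * p ^ N < p ^ (N + 1) := by
    have hm := Nat.mod_lt x hpN
    have hd : digit p N x < p := digit_lt hp N x
    have h3 : digit p N x * p ^ N ≤ (p - 1) * p ^ N := Nat.mul_le_mul_right _ (by omega)
    have hps : p ^ N + (p - 1) * p ^ N = p ^ (N + 1) := by
      have h4 : p - 1 + 1 = p := by omega
      calc p ^ N + (p - 1) * p ^ N = (p - 1 + 1) * p ^ N := by ring
      _ = p ^ (N + 1) := by rw [h4, ← pow_succ']
    calc x % p ^ N + digit p N x * p ^ N < p ^ N + (p - 1) * p ^ N :=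
          Nat.add_lt_add_of_lt_of_le hm h3
    _ = p ^ (N + 1) := hps
  conv_lhs => rw [h1]
  rw [Nat.mul_add_mod]
  exact Nat.mod_eq_of_lt h2

lemma mod_pow_eq_sum_digit (hp : 1 < p) (x N : ℕ) :
    x % p ^ N = ∑ ℓ ∈ Finset.range N, digit p ℓ x * p ^ ℓ := by
  induction N with
  | zero => simp [Nat.mod_one]
  | succ N ih => rw [Finset.sum_range_succ, ← ih, mod_pow_succ' hp]

lemma digit_ext (hp : 1 < p) {a b : ℕ} (h : ∀ ℓ, digit p ℓ a = digit p ℓ b) : a = b := by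
  have ha : a % p ^ (a + b) = a := Nat.mod_eq_of_lt (lt_pow_self' hp (by omega))
  have hb : b % p ^ (a + b) = b := Nat.mod_eq_of_lt (lt_pow_self' hp (by omega))
  have key : a % p ^ (a + b) = b % p ^ (a + b) := by
    rw [mod_pow_eq_sum_digit hp, mod_pow_eq_sum_digit hp]
    exact Finset.sum_congr rfl fun ℓ _ => by rw [h ℓ]
  rw [ha, hb] at key
  exact key

lemma sum_base_lt (hp : 1 < p) {g : ℕ → ℕ} {N : ℕ} (hg : ∀ ℓ < N, g ℓ < p) :
    ∑ ℓ ∈ Finset.range N, g ℓ * p ^ ℓ < p ^ N := by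
  induction N with
  | zero => simpa using Nat.one_pos
  | succ N ih =>
    rw [Finset.sum_range_succ]
    have h1 : ∑ ℓ ∈ Finset.range N, g ℓ * p ^ ℓ < p ^ N := ih fun ℓ hℓ => hg ℓ (by omega)
    have h3 : g N * p ^ N ≤ (p - 1) * p ^ N :=
      Nat.mul_le_mul_right _ (by have := hg N (by omega); omega)
    have hps : p ^ N + (p - 1) * p ^ N = p ^ (N + 1) := by
      have h4 : p - 1 + 1 = p := by omega
      calc p ^ N + (p - 1) * p ^ N = (p - 1 + 1) * p ^ N := by ring
      _ = p ^ (N + 1) := by rw [h4, ← pow_succ']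
    calc ∑ ℓ ∈ Finset.range N, g ℓ * p ^ ℓ + g N * p ^ N < p ^ N + (p - 1) * p ^ N :=
          Nat.add_lt_add_of_lt_of_le h1 h3
    _ = p ^ (N + 1) := hps

lemma digit_sum_base (hp : 1 < p) (g : ℕ → ℕ) (N : ℕ) (hg : ∀ ℓ < N, g ℓ < p) (L : ℕ) :
    digit p L (∑ ℓ ∈ Finset.range N, g ℓ * p ^ ℓ) = if L < N then g L else 0 := by
  split
  case isFalse hLN =>
    exact digit_eq_zero hp (lt_of_lt_of_le (sum_base_lt hp hg)
      (Nat.pow_le_pow_right (by omega) (by omega)))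
  case isTrue hLN =>
    have hsplit : Finset.range N = Finset.range (L + 1) ∪ Finset.Ico (L + 1) N := by
      simp only [Finset.range_eq_Ico]
      exact (Finset.Ico_union_Ico_eq_Ico (by omega) (by omega)).symm
    have hdisj : Disjoint (Finset.range (L + 1)) (Finset.Ico (L + 1) N) := by
      simp only [Finset.disjoint_left, Finset.mem_range, Finset.mem_Ico]
      omega
    rw [hsplit, Finset.sum_union hdisj, Finset.sum_range_succ]
    have hAlt : ∑ ℓ ∈ Finset.range L, g ℓ * p ^ ℓ < p ^ L :=
      sum_base_lt hp fun ℓ hℓ => hg ℓ (by omega)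
    have hIco : ∑ ℓ ∈ Finset.Ico (L + 1) N, g ℓ * p ^ ℓ =
        p ^ L * (p * ∑ ℓ ∈ Finset.Ico (L + 1) N, g ℓ * p ^ (ℓ - L - 1)) := by
      rw [Finset.mul_sum, Finset.mul_sum]
      refine Finset.sum_congr rfl fun ℓ hℓ => ?_
      rw [Finset.mem_Ico] at hℓ
      have : p ^ ℓ = p ^ L * (p * p ^ (ℓ - L - 1)) := by
        rw [← pow_succ', ← pow_add]
        congr 1
        omega
      rw [this]
      ring
    rw [hIco]
    have harr : ∑ ℓ ∈ Finset.range L, g ℓ * p ^ ℓ + g L * p ^ L +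
        p ^ L * (p * ∑ ℓ ∈ Finset.Ico (L + 1) N, g ℓ * p ^ (ℓ - L - 1)) =
        ∑ ℓ ∈ Finset.range L, g ℓ * p ^ ℓ +
        p ^ L * (g L + p * ∑ ℓ ∈ Finset.Ico (L + 1) N, g ℓ * p ^ (ℓ - L - 1)) := by ring
    rw [digit, harr, Nat.add_mul_div_left _ _ (pow_pos (by omega) _),
      Nat.div_eq_of_lt hAlt, zero_add, Nat.add_mul_mod_self_left,
      Nat.mod_eq_of_lt (hg L hLN)]

end DigitLemmas
/-- `p`-ary addition without carry of a finite family: the `L`-th `p`-ary digit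
is the sum of the `L`-th digits mod `p` (iterated `⊕_p`). -/
def oplusSum {ι : Type*} (p : ℕ) (s : Finset ι) (f : ι → ℕ) : ℕ :=
  ∑ L ∈ Finset.range (∑ i ∈ s, f i + 1), (∑ i ∈ s, digit p L (f i)) % p * p ^ L

section MoreLemmas

variable {p : ℕ}

lemma digit_oplusSum (hp : 1 < p) {ι : Type*} (s : Finset ι) (f : ι → ℕ) (L : ℕ) :
    digit p L (oplusSum p s f) = (∑ i ∈ s, digit p L (f i)) % p := by
  rw [oplusSum, digit_sum_base hp _ _ (fun ℓ _ => Nat.mod_lt _ (by omega))]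
  split
  case isTrue => rfl
  case isFalse h =>
    have : ∀ i ∈ s, digit p L (f i) = 0 := fun i hi =>
      digit_eq_zero_of_le hp (le_trans (Finset.single_le_sum (fun j _ => Nat.zero_le _) hi)
        (by omega))
    rw [Finset.sum_congr rfl this]
    simp

/-- digits below `L` only depend on the residue mod `p^L`. -/
lemma digit_mod_pow (hp : 1 < p) {ℓ L : ℕ} (h : ℓ < L) (x : ℕ) :
    digit p ℓ (x % p ^ L) = digit p ℓ x := by
  have hd : x = x % p ^ L + p ^ ℓ * (p ^ (L - ℓ) * (x / p ^ L)) := by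
    have : p ^ ℓ * p ^ (L - ℓ) = p ^ L := by rw [← pow_add]; congr 1; omega
    rw [← mul_assoc, this]
    have := Nat.div_add_mod x (p ^ L)
    omega
  have h2 : x / p ^ ℓ = (x % p ^ L) / p ^ ℓ + p ^ (L - ℓ) * (x / p ^ L) := by
    conv_lhs => rw [hd]
    rw [Nat.add_mul_div_left _ _ (pow_pos (by omega) _)]
  have h3 : p ^ (L - ℓ) * (x / p ^ L) = p * (p ^ (L - ℓ - 1) * (x / p ^ L)) := by
    rw [← mul_assoc, ← pow_succ']
    congr 2
    omega
  rw [digit, digit, h2, h3, Nat.add_mul_mod_self_left]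

lemma digit_div_pow (p ℓ L x : ℕ) : digit p ℓ (x / p ^ L) = digit p (ℓ + L) x := by
  rw [digit, digit, Nat.div_div_eq_div_mul, ← pow_add, Nat.add_comm L ℓ]

private lemma lt_aux (p a b L Q dA dB ma mb : ℕ) (ha : a = Q + (ma + dA * p ^ L))
    (hb : b = Q + (mb + dB * p ^ L)) (h1 : ma < p ^ L)
    (h2 : (dA + 1) * p ^ L ≤ dB * p ^ L) : a < b := by linarith

lemma lt_of_digit_lt (hp : 1 < p) {a b L : ℕ}
    (hhi : ∀ ℓ, L < ℓ → digit p ℓ a = digit p ℓ b) (hL : digit p L a < digit p L b) :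
    a < b := by
  have hq : a / p ^ (L + 1) = b / p ^ (L + 1) := by
    refine digit_ext hp fun ℓ => ?_
    rw [digit_div_pow, digit_div_pow]
    exact hhi _ (by omega)
  have ha : a = p ^ (L + 1) * (b / p ^ (L + 1)) + (a % p ^ L + digit p L a * p ^ L) := by
    rw [← hq, ← mod_pow_succ' hp]
    have := Nat.div_add_mod a (p ^ (L + 1))
    omega
  have hb : b = p ^ (L + 1) * (b / p ^ (L + 1)) + (b % p ^ L + digit p L b * p ^ L) := by
    rw [← mod_pow_succ' hp]
    have := Nat.div_add_mod b (p ^ (L + 1))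
    omega
  have h1 : a % p ^ L < p ^ L := Nat.mod_lt _ (pow_pos (by omega) _)
  have h2 : (digit p L a + 1) * p ^ L ≤ digit p L b * p ^ L := Nat.mul_le_mul_right _ (by omega)
  exact lt_aux p a b L _ _ _ _ _ ha hb h1 h2

/-- greedy choice of a subtraction pattern with prescribed total. -/
lemma exists_le_sum {m : ℕ} (f : Fin m → ℕ) (t : ℕ) (ht : t ≤ ∑ i, f i) :
    ∃ a : Fin m → ℕ, (∀ i, a i ≤ f i) ∧ ∑ i, a i = t := by
  induction t with
  | zero => exact ⟨fun _ => 0, fun i => Nat.zero_le _, by simp⟩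
  | succ t ih =>
    obtain ⟨a, h1, h2⟩ := ih (by omega)
    have hlt : ∑ i, a i < ∑ i, f i := by omega
    obtain ⟨i, -, hi⟩ := Finset.exists_lt_of_sum_lt hlt
    refine ⟨Function.update a i (a i + 1), fun j => ?_, ?_⟩
    · rcases eq_or_ne j i with rfl | hj
      · rw [Function.update_self]; omega
      · rw [Function.update_of_ne hj]; exact h1 j
    · rw [Finset.sum_update_of_mem (Finset.mem_univ i), Finset.sdiff_singleton_eq_erase]
      rw [← Finset.sum_erase_add _ _ (Finset.mem_univ i)] at h2
      omega

lemma nat_eq_of_zmod_eq (hp : 1 < p) {a b : ℕ} (ha : a < p) (hb : b < p)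
    (h : (a : ZMod p) = b) : a = b := by
  have := congrArg ZMod.val h
  rwa [ZMod.val_cast_of_lt ha, ZMod.val_cast_of_lt hb] at this

end MoreLemmas

section PadicLemmas

variable {p : ℕ}

lemma pv_eq (hp : 1 < p) {n L : ℕ} (hn : 0 < n) (h1 : p ^ L ∣ n) (h2 : ¬ p ^ (L + 1) ∣ n) :
    padicValNat p n = L := by
  rw [padicValNat_def' (by omega : p ≠ 1) hn.ne']
  exact multiplicity_eq_of_dvd_of_not_dvd h1 h2

lemma pv_not_dvd (hp : 1 < p) {n : ℕ} (hn : 0 < n) : ¬ p ^ (padicValNat p n + 1) ∣ n := by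
  rw [padicValNat_def' (by omega : p ≠ 1) hn.ne']
  exact ((Nat.finiteMultiplicity_iff.2 ⟨by omega, hn⟩).multiplicity_lt_iff_not_dvd).1
    (Nat.lt_succ_self _)

lemma pv_mul_pow (hp : 1 < p) {A L : ℕ} (hA0 : 0 < A) (hA : ¬ p ∣ A) :
    padicValNat p (A * p ^ L) = L := by
  refine pv_eq hp (by positivity) (dvd_mul_left _ _) fun hdvd => hA ?_
  obtain ⟨c, hc⟩ := hdvd
  refine ⟨c, ?_⟩
  have h' : p ^ L * A = p ^ L * (p * c) := by
    rw [mul_comm (p ^ L) A, hc, pow_succ, mul_assoc, mul_comm p c, ← mul_assoc]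
  exact Nat.eq_of_mul_eq_mul_left (pow_pos (by omega) _) h'

lemma pv_lt_of_lt_pow (hp : 1 < p) {t L : ℕ} (ht : 0 < t) (h : t < p ^ L) :
    padicValNat p t < L := by
  by_contra hle
  push_neg at hle
  have : p ^ L ∣ t := dvd_trans (pow_dvd_pow _ hle) pow_padicValNat_dvd
  exact absurd (Nat.le_of_dvd ht this) (by omega)

lemma pv_shift (hp : 1 < p) {A L r₁ r₂ : ℕ} (hA0 : 0 < A) (hAp : A < p)
    (h1 : r₁ < p ^ L) (h2 : r₂ < p ^ L) :
    padicValNat p (A * p ^ L + r₁ - r₂) =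
      if r₁ = r₂ then L else padicValNat p (max r₁ r₂ - min r₁ r₂) := by
  have hpL : 0 < p ^ L := pow_pos (by omega) _
  have hpLA : p ^ L ≤ A * p ^ L := Nat.le_mul_of_pos_left _ hA0
  have hpos : 0 < A * p ^ L + r₁ - r₂ := by omega
  have hpdvdA : ¬ p ∣ A := fun h => absurd (Nat.le_of_dvd hA0 h) (by omega)
  split
  case isTrue h =>
    subst h
    rw [Nat.add_sub_cancel]
    exact pv_mul_pow hp hA0 hpdvdA
  case isFalse hne =>
    set t := max r₁ r₂ - min r₁ r₂ with htdef
    have ht0 : 0 < t := by simp only [htdef]; omega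
    have htlt : t < p ^ L := by simp only [htdef]; omega
    set e := padicValNat p t with hedef
    have heL : e < L := pv_lt_of_lt_pow hp ht0 htlt
    have hdvd_t : p ^ e ∣ t := pow_padicValNat_dvd
    have hndvd_t : ¬ p ^ (e + 1) ∣ t := pv_not_dvd hp ht0
    have hdvd_pL : p ^ e ∣ p ^ L := pow_dvd_pow _ (by omega)
    have hdvd_pL' : p ^ (e + 1) ∣ p ^ L := pow_dvd_pow _ (by omega)
    refine pv_eq hp hpos ?_ ?_
    · rcases le_total r₂ r₁ with hc | hc
      · have : A * p ^ L + r₁ - r₂ = A * p ^ L + t := by simp only [htdef]; omega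
        rw [this]
        exact Dvd.dvd.add (Dvd.dvd.mul_left hdvd_pL _) hdvd_t
      · have : A * p ^ L + r₁ - r₂ = A * p ^ L - t := by simp only [htdef]; omega
        rw [this]
        exact Nat.dvd_sub (Dvd.dvd.mul_left hdvd_pL _) hdvd_t
    · intro hdvd
      rcases le_total r₂ r₁ with hc | hc
      · have he : A * p ^ L + r₁ - r₂ = A * p ^ L + t := by simp only [htdef]; omega
        rw [he] at hdvd
        exact hndvd_t ((Nat.dvd_add_right (Dvd.dvd.mul_left hdvd_pL' _)).1 hdvd)
      · have he : A * p ^ L + r₁ - r₂ = A * p ^ L - t := by simp only [htdef]; omega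
        rw [he] at hdvd
        have : t = A * p ^ L - (A * p ^ L - t) := by omega
        rw [this] at hndvd_t
        exact hndvd_t (Nat.dvd_sub (Dvd.dvd.mul_left hdvd_pL' _) hdvd)

end PadicLemmas
/-- `p`-adic order of a natural number, with `ord 0 = ∞`. -/
noncomputable def ordE (p x : ℕ) : ℕ∞ := if x = 0 then ⊤ else (padicValNat p x : ℕ∞)

/-- Legal move in Nim with `m` coins and `p`-index `k`. -/
def NimMove (p k : ℕ) {m : ℕ} (X Y : Fin m → ℕ) : Prop :=
  (∀ i, Y i ≤ X i) ∧
    0 < (Finset.univ.filter fun i => X i ≠ Y i).card ∧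
    (Finset.univ.filter fun i => X i ≠ Y i).card < k ∧
    ordE p (∑ i, (X i - Y i)) = ⨅ i, ordE p (X i - Y i)

section PartA

variable {p : ℕ}

lemma oplus_ne_of_move (hp : 1 < p) {m k : ℕ} (X Y : Fin m → ℕ) (hmv : NimMove p k X Y) :
    oplusSum p Finset.univ Y ≠ oplusSum p Finset.univ X := by
  obtain ⟨hle, hpos, -, hord⟩ := hmv
  haveI : NeZero p := ⟨by omega⟩
  set d : Fin m → ℕ := fun i => X i - Y i with hd
  have hDpos : 0 < ∑ i, d i := by
    obtain ⟨i, hi⟩ := Finset.card_pos.1 hpos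
    rw [Finset.mem_filter] at hi
    have h0 : 0 < d i := by
      have h1 := hle i
      have h2 := hi.2
      simp only [hd]
      omega
    exact lt_of_lt_of_le h0 (Finset.single_le_sum (fun j _ => Nat.zero_le _) (Finset.mem_univ i))
  set L := padicValNat p (∑ i, d i) with hL
  have hndvdD : ¬ p ^ (L + 1) ∣ ∑ i, d i := pv_not_dvd hp hDpos
  have hordD : ordE p (∑ i, d i) = (L : ℕ∞) := by rw [ordE, if_neg (by omega)]
  have hdvd_i : ∀ i, p ^ L ∣ d i := by
    intro i
    rcases Nat.eq_zero_or_pos (d i) with h | h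
    · simp [h]
    have h1 : (L : ℕ∞) ≤ ordE p (d i) := by
      rw [← hordD, hord]
      exact iInf_le _ i
    rw [ordE, if_neg (by omega)] at h1
    have h2 : L ≤ padicValNat p (d i) := by exact_mod_cast h1
    exact dvd_trans (pow_dvd_pow _ h2) pow_padicValNat_dvd
  intro hEq
  apply hndvdD
  have hdig := congrArg (digit p L) hEq
  rw [digit_oplusSum hp, digit_oplusSum hp] at hdig
  set c : Fin m → ℕ := fun i => d i / p ^ L with hc
  have hci : ∀ i, d i = p ^ L * c i := fun i => (Nat.mul_div_cancel' (hdvd_i i)).symm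
  have hsumc : ∑ i, d i = p ^ L * ∑ i, c i := by
    rw [Finset.mul_sum]
    exact Finset.sum_congr rfl fun i _ => hci i
  suffices hpc : p ∣ ∑ i, c i by
    obtain ⟨e, he⟩ := hpc
    exact ⟨e, by rw [hsumc, he]; ring⟩
  rw [← ZMod.natCast_eq_zero_iff]
  have hdivY : ∀ i, Y i / p ^ L + c i = X i / p ^ L := by
    intro i
    have h1 : X i = Y i + p ^ L * c i := by
      have h2 := hle i
      have h3 := hci i
      simp only [hd] at h3
      omega
    rw [h1, Nat.add_mul_div_left _ _ (pow_pos (by omega) _)]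
  have hcast : ∀ i, (digit p L (Y i) : ZMod p) = (digit p L (X i) : ZMod p) - (c i : ZMod p) := by
    intro i
    have h1 := congrArg (fun n : ℕ => (n : ZMod p)) (hdivY i)
    simp only [Nat.cast_add] at h1
    rw [digit, digit, ZMod.natCast_mod, ZMod.natCast_mod]
    linear_combination h1
  have hzd : (∑ i, (digit p L (Y i) : ZMod p)) = ∑ i, (digit p L (X i) : ZMod p) := by
    have h1 := congrArg (fun n : ℕ => (n : ZMod p)) hdig
    simp only [ZMod.natCast_mod, Nat.cast_sum] at h1
    exact h1
  have h2 : (∑ i, (digit p L (Y i) : ZMod p)) =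
      ∑ i, (digit p L (X i) : ZMod p) - ∑ i, (c i : ZMod p) := by
    rw [← Finset.sum_sub_distrib]
    exact Finset.sum_congr rfl fun i _ => hcast i
  rw [Nat.cast_sum]
  have := h2.symm.trans hzd
  linear_combination -this

end PartA

section SubSmall

variable {p : ℕ}

lemma sub_small_div (hp : 1 < p) {q A : ℕ} (h : A ≤ q % p) : (q - A) / p = q / p := by
  have h1 := Nat.div_add_mod q p
  have hm : q % p < p := Nat.mod_lt q (by omega)
  have h2 : q - A = p * (q / p) + (q % p - A) := by omega
  rw [h2, Nat.mul_add_div (by omega), Nat.div_eq_of_lt (show q % p - A < p by omega), add_zero]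

lemma sub_small_mod (hp : 1 < p) {q A : ℕ} (h : A ≤ q % p) : (q - A) % p = q % p - A := by
  have h1 := Nat.div_add_mod q p
  have hm : q % p < p := Nat.mod_lt q (by omega)
  have h2 : q - A = p * (q / p) + (q % p - A) := by omega
  rw [h2, Nat.mul_add_mod, Nat.mod_eq_of_lt (show q % p - A < p by omega)]

lemma digit_sub_small (hp : 1 < p) {q A : ℕ} (h : A ≤ q % p) {j : ℕ} (hj : 1 ≤ j) :
    digit p j (q - A) = digit p j q := by
  have hdiv : (q - A) / p ^ j = q / p ^ j := by
    have hj' : p ^ j = p * p ^ (j - 1) := by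
      rw [← pow_succ']
      congr 1
      omega
    rw [hj', ← Nat.div_div_eq_div_mul, ← Nat.div_div_eq_div_mul, sub_small_div hp h]
  rw [digit, digit, hdiv]

end SubSmall
section PartB

variable {p : ℕ}

private lemma arith1 {P q a r R X : ℕ} (h4 : P * q + r = X) (h3 : R < P) (ha : 1 ≤ a)
    (haq : a ≤ q) : P * (q - a) + R < X := by
  have h5 : P * (q - a) + P * a = P * q := by
    rw [← Nat.mul_add]
    congr 1
    omega
  have h6 : P ≤ P * a := Nat.le_mul_of_pos_right _ (by omega)
  omega

private lemma arith2 {P q a r X : ℕ} (h4 : P * q + r = X) (haq : a ≤ q) :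
    X - (P * (q - a) + r) = P * a := by
  have h5 : P * (q - a) + P * a = P * q := by
    rw [← Nat.mul_add]
    congr 1
    omega
  omega

private lemma arith3 {P q a r R X : ℕ} (h4 : P * q + r = X) (ha : 1 ≤ a) (haq : a ≤ q)
    (hR : R < P) : X - (P * (q - a) + R) = P * a + r - R := by
  have h5 : P * (q - a) + P * a = P * q := by
    rw [← Nat.mul_add]
    congr 1
    omega
  have h6 : P ≤ P * a := Nat.le_mul_of_pos_right _ (by omega)
  omega

private lemma arith4 {P A d r R : ℕ} (hA : 1 ≤ A) (hAd : A ≤ d) (hR : R < P) (hr : r < P) :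
    P * A + r - R + P * (d - A) = P * d + r - R := by
  have h5 : P * (d - A) + P * A = P * d := by
    rw [← Nat.mul_add]
    congr 1
    omega
  have h6 : P ≤ P * A := Nat.le_mul_of_pos_right _ (by omega)
  omega

lemma exists_move (hp : 1 < p) {m : ℕ} (X : Fin m → ℕ) {u : ℕ}
    (hu : u < oplusSum p Finset.univ X) :
    ∃ Y : Fin m → ℕ, NimMove p (min p (m + 1)) X Y ∧ oplusSum p Finset.univ Y = u := by
  haveI : NeZero p := ⟨by omega⟩
  classical
  set s := oplusSum p Finset.univ X with hs
  have hpL0 : ∀ L : ℕ, 0 < p ^ L := fun L => pow_pos (by omega) _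
  set N := u + s with hN
  set L := Nat.findGreatest (fun ℓ => digit p ℓ u ≠ digit p ℓ s) N with hLdef
  have hPL : digit p L u ≠ digit p L s := by
    have hne : u ≠ s := by omega
    have hw : ∃ w, digit p w u ≠ digit p w s := by
      by_contra hall
      push_neg at hall
      exact hne (digit_ext hp hall)
    obtain ⟨w, hw⟩ := hw
    have hwN : w ≤ N := by
      by_contra hgt
      push_neg at hgt
      have h1 : digit p w u = 0 := digit_eq_zero_of_le hp (by omega)
      have h2 : digit p w s = 0 := digit_eq_zero_of_le hp (by omega)
      exact hw (h1.trans h2.symm)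
    exact Nat.findGreatest_spec (P := fun ℓ => digit p ℓ u ≠ digit p ℓ s) hwN hw
  have hhi : ∀ ℓ, L < ℓ → digit p ℓ u = digit p ℓ s := by
    intro ℓ hℓ
    rcases le_or_gt ℓ N with h | h
    · by_contra hne'
      exact Nat.findGreatest_is_greatest (P := fun ℓ => digit p ℓ u ≠ digit p ℓ s) hℓ h hne'
    · rw [digit_eq_zero_of_le hp (by omega), digit_eq_zero_of_le hp (by omega)]
  have hLlt : digit p L u < digit p L s := by
    rcases lt_trichotomy (digit p L u) (digit p L s) with h | h | h
    · exact h
    · exact absurd h hPL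
    · exact absurd (lt_of_digit_lt hp (fun ℓ hℓ => (hhi ℓ hℓ).symm) h) (by omega)
  set δ := digit p L s - digit p L u with hδ
  have hδpos : 0 < δ := by omega
  have hδp : δ < p := by have := digit_lt hp L s; omega
  have hdigs : ∀ ℓ, digit p ℓ s = (∑ i, digit p ℓ (X i)) % p := fun ℓ => by
    rw [hs, digit_oplusSum hp]
  have hδle : δ ≤ ∑ i, digit p L (X i) := by
    have h1 := hdigs L
    have h2 : (∑ i, digit p L (X i)) % p ≤ ∑ i, digit p L (X i) := Nat.mod_le _ _
    omega
  obtain ⟨a, ha_le, ha_sum⟩ := exists_le_sum (fun i => digit p L (X i)) δ hδle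
  obtain ⟨i0, -, hi0⟩ : ∃ i ∈ Finset.univ, a i ≠ 0 :=
    Finset.exists_ne_zero_of_sum_ne_zero (by omega)
  clear_value s N L δ
  set S : ℕ → ℕ := fun ℓ => ∑ j ∈ Finset.univ.erase i0, digit p ℓ (X j) with hS
  set rnew := ∑ ℓ ∈ Finset.range L, ((digit p ℓ u + (p - 1) * S ℓ) % p) * p ^ ℓ with hrnew
  have hrnew_lt : rnew < p ^ L := sum_base_lt hp fun ℓ _ => Nat.mod_lt _ (by omega)
  have hrnew_digit : ∀ ℓ, ℓ < L → digit p ℓ rnew = (digit p ℓ u + (p - 1) * S ℓ) % p := by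
    intro ℓ hℓ
    rw [hrnew, digit_sum_base hp _ _ (fun t _ => Nat.mod_lt _ (by omega)), if_pos hℓ]
  set R : Fin m → ℕ := fun i => if i = i0 then rnew else X i % p ^ L with hR
  have hR_lt : ∀ i, R i < p ^ L := by
    intro i
    show (if i = i0 then rnew else X i % p ^ L) < p ^ L
    split
    · exact hrnew_lt
    · exact Nat.mod_lt _ (hpL0 L)
  set Y : Fin m → ℕ := fun i => p ^ L * (X i / p ^ L - a i) + R i with hY
  have ha_q : ∀ i, a i ≤ X i / p ^ L := fun i =>
    le_trans (ha_le i) (Nat.mod_le _ _)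
  have hYdiv : ∀ i, Y i / p ^ L = X i / p ^ L - a i := by
    intro i
    rw [hY]
    simp only
    rw [Nat.mul_add_div (hpL0 L), Nat.div_eq_of_lt (hR_lt i), add_zero]
  have hYmod : ∀ i, Y i % p ^ L = R i := by
    intro i
    rw [hY]
    simp only
    rw [Nat.mul_add_mod, Nat.mod_eq_of_lt (hR_lt i)]
  have hdistrib : ∀ i, p ^ L * (X i / p ^ L - a i) + p ^ L * a i = p ^ L * (X i / p ^ L) := by
    intro i
    rw [← Nat.mul_add]
    congr 1
    have := ha_q i
    omega
  have hYeq : ∀ i, a i = 0 → i ≠ i0 → Y i = X i := by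
    intro i h0 hne
    rw [hY]
    simp only
    rw [h0, Nat.sub_zero, hR]
    simp only [if_neg hne]
    exact Nat.div_add_mod _ _
  have hYlt : ∀ i, a i ≠ 0 → Y i < X i := by
    intro i h0
    show p ^ L * (X i / p ^ L - a i) + R i < X i
    exact arith1 (Nat.div_add_mod (X i) (p ^ L)) (hR_lt i) (by omega) (ha_q i)
  have hYle : ∀ i, Y i ≤ X i := by
    intro i
    rcases eq_or_ne (a i) 0 with h0 | h0
    · rcases eq_or_ne i i0 with rfl | hne
      · exact absurd h0 hi0
      · exact (hYeq i h0 hne).le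
    · exact (hYlt i h0).le
  have hfilter : (Finset.univ.filter fun i => X i ≠ Y i) = (Finset.univ.filter fun i => a i ≠ 0) := by
    ext i
    simp only [Finset.mem_filter, Finset.mem_univ, true_and]
    constructor
    · intro hne h0
      rcases eq_or_ne i i0 with rfl | hne'
      · exact hi0 h0
      · exact hne (hYeq i h0 hne').symm
    · intro h0
      have := hYlt i h0
      omega
  have hcard1 : 0 < (Finset.univ.filter fun i => a i ≠ 0).card :=
    Finset.card_pos.2 ⟨i0, Finset.mem_filter.2 ⟨Finset.mem_univ _, hi0⟩⟩
  have hcard2 : (Finset.univ.filter fun i => a i ≠ 0).card ≤ δ := by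
    calc (Finset.univ.filter fun i => a i ≠ 0).card
        = ∑ i ∈ Finset.univ.filter (fun i => a i ≠ 0), 1 := Finset.card_eq_sum_ones _
      _ ≤ ∑ i ∈ Finset.univ.filter (fun i => a i ≠ 0), a i :=
          Finset.sum_le_sum fun i hi => by
            have := (Finset.mem_filter.1 hi).2
            omega
      _ ≤ ∑ i, a i := Finset.sum_le_sum_of_subset (Finset.filter_subset _ _)
      _ = δ := ha_sum
  have hcardm : (Finset.univ.filter fun i => a i ≠ 0).card ≤ m := by
    have h1 := Finset.card_filter_le Finset.univ (fun i => a i ≠ 0)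
    simpa using h1
  -- differences
  have hd_ne : ∀ i, i ≠ i0 → X i - Y i = p ^ L * a i := by
    intro i hne
    have hRi : R i = X i % p ^ L := by
      show (if i = i0 then rnew else X i % p ^ L) = X i % p ^ L
      rw [if_neg hne]
    have hYi : Y i = p ^ L * (X i / p ^ L - a i) + X i % p ^ L := by
      rw [show Y i = p ^ L * (X i / p ^ L - a i) + R i from rfl, hRi]
    rw [hYi]
    exact arith2 (Nat.div_add_mod (X i) (p ^ L)) (ha_q i)
  have ha0pos : 0 < a i0 := by omega
  have ha0p : a i0 < p := lt_of_le_of_lt (ha_le i0) (digit_lt hp _ _)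
  have ha0δ : a i0 ≤ δ := by
    rw [← ha_sum]
    exact Finset.single_le_sum (fun j _ => Nat.zero_le _) (Finset.mem_univ i0)
  have hr1 : X i0 % p ^ L < p ^ L := Nat.mod_lt _ (hpL0 L)
  have hd_i0 : X i0 - Y i0 = p ^ L * a i0 + X i0 % p ^ L - rnew := by
    have hRi : R i0 = rnew := by
      show (if i0 = i0 then rnew else X i0 % p ^ L) = rnew
      rw [if_pos rfl]
    have hYi : Y i0 = p ^ L * (X i0 / p ^ L - a i0) + rnew := by
      rw [show Y i0 = p ^ L * (X i0 / p ^ L - a i0) + R i0 from rfl, hRi]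
    rw [hYi]
    exact arith3 (Nat.div_add_mod (X i0) (p ^ L)) ha0pos (ha_q i0) hrnew_lt
  clear_value S rnew R Y
  obtain ⟨r1, hr1def⟩ : ∃ r, X i0 % p ^ L = r := ⟨_, rfl⟩
  rw [hr1def] at hr1 hd_i0
  have hD : ∑ i, (X i - Y i) = p ^ L * δ + r1 - rnew := by
    rw [← Finset.add_sum_erase _ _ (Finset.mem_univ i0)]
    have herase : ∑ i ∈ Finset.univ.erase i0, (X i - Y i) = p ^ L * (δ - a i0) := by
      have hsum_er : ∑ i ∈ Finset.univ.erase i0, a i = δ - a i0 := by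
        have h7 := Finset.add_sum_erase Finset.univ a (Finset.mem_univ i0)
        omega
      calc ∑ i ∈ Finset.univ.erase i0, (X i - Y i)
          = ∑ i ∈ Finset.univ.erase i0, p ^ L * a i :=
            Finset.sum_congr rfl fun i hi => hd_ne i (Finset.ne_of_mem_erase hi)
        _ = p ^ L * ∑ i ∈ Finset.univ.erase i0, a i := (Finset.mul_sum _ _ _).symm
        _ = p ^ L * (δ - a i0) := by rw [hsum_er]
    rw [herase, hd_i0]
    exact arith4 ha0pos ha0δ hrnew_lt hr1
  have hd0pos : 0 < X i0 - Y i0 := by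
    have h6 : p ^ L ≤ p ^ L * a i0 := Nat.le_mul_of_pos_right _ ha0pos
    rw [hd_i0]
    omega
  have hDpos : 0 < ∑ i, (X i - Y i) := by
    have h6 : p ^ L ≤ p ^ L * δ := Nat.le_mul_of_pos_right _ hδpos
    rw [hD]
    omega
  -- p-adic orders
  have hvd0 : padicValNat p (X i0 - Y i0) =
      if r1 = rnew then L
      else padicValNat p (max (r1) rnew - min (r1) rnew) := by
    rw [hd_i0, mul_comm (p ^ L) (a i0)]
    exact pv_shift hp ha0pos ha0p hr1 hrnew_lt
  have hvD : padicValNat p (∑ i, (X i - Y i)) =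
      if r1 = rnew then L
      else padicValNat p (max (r1) rnew - min (r1) rnew) := by
    rw [hD, mul_comm (p ^ L) δ]
    exact pv_shift hp hδpos hδp hr1 hrnew_lt
  have hEleL : padicValNat p (X i0 - Y i0) ≤ L := by
    rw [hvd0]
    split
    · exact le_refl _
    case isFalse hne =>
      have h1 : 0 < max (r1) rnew - min (r1) rnew := by omega
      have h2 : max (r1) rnew - min (r1) rnew < p ^ L := by omega
      exact (pv_lt_of_lt_pow hp h1 h2).le
  have hordc : ordE p (∑ i, (X i - Y i)) = ⨅ i, ordE p (X i - Y i) := by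
    have hOd0 : ordE p (X i0 - Y i0) = (padicValNat p (X i0 - Y i0) : ℕ∞) := by
      rw [ordE, if_neg (by omega)]
    have hOD : ordE p (∑ i, (X i - Y i)) = (padicValNat p (X i0 - Y i0) : ℕ∞) := by
      rw [ordE, if_neg (by omega), hvD, ← hvd0]
    rw [hOD]
    refine le_antisymm (le_iInf fun i => ?_) (hOd0 ▸ iInf_le _ i0)
    rcases eq_or_ne i i0 with rfl | hne
    · rw [hOd0]
    · rcases eq_or_ne (a i) 0 with h0 | h0
      · have hz : X i - Y i = 0 := by
          have := hYeq i h0 hne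
          omega
        rw [hz]
        simp [ordE]
      · have hap : a i < p := lt_of_le_of_lt (ha_le i) (digit_lt hp _ _)
        have hdi : X i - Y i = p ^ L * a i := hd_ne i hne
        have hne0 : X i - Y i ≠ 0 := by
          have h6 : p ^ L ≤ p ^ L * a i := Nat.le_mul_of_pos_right _ (by omega)
          omega
        have hLi : ordE p (X i - Y i) = (L : ℕ∞) := by
          rw [ordE, if_neg hne0, hdi, mul_comm,
            pv_mul_pow hp (by omega) (fun hdvd => absurd (Nat.le_of_dvd (by omega) hdvd) (by omega))]
        rw [hLi]
        exact_mod_cast hEleL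
  -- digits of Y
  have hYdig_hi : ∀ ℓ, L < ℓ → ∀ i, digit p ℓ (Y i) = digit p ℓ (X i) := by
    intro ℓ hℓ i
    have h2 : digit p ℓ (Y i) = digit p (ℓ - L) (Y i / p ^ L) := by
      rw [digit_div_pow]
      congr 1
      omega
    have h3 : digit p ℓ (X i) = digit p (ℓ - L) (X i / p ^ L) := by
      rw [digit_div_pow]
      congr 1
      omega
    rw [h2, h3, hYdiv i]
    exact digit_sub_small hp (ha_le i) (by omega)
  have hYdig_L : ∀ i, digit p L (Y i) = digit p L (X i) - a i := by
    intro i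
    have h1 : digit p L (Y i) = Y i / p ^ L % p := rfl
    rw [h1, hYdiv i, sub_small_mod hp (ha_le i)]
    rfl
  have hYdig_lo : ∀ ℓ, ℓ < L → ∀ i, digit p ℓ (Y i) = digit p ℓ (R i) := by
    intro ℓ hℓ i
    rw [← digit_mod_pow hp hℓ (Y i), hYmod i]
  -- the resulting oplus value
  have hfinal : oplusSum p Finset.univ Y = u := by
    refine digit_ext hp fun ℓ => ?_
    rw [digit_oplusSum hp]
    refine nat_eq_of_zmod_eq hp (Nat.mod_lt _ (by omega)) (digit_lt hp _ _) ?_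
    rw [ZMod.natCast_mod, Nat.cast_sum]
    rcases lt_trichotomy ℓ L with hcase | hcase | hcase
    · -- low digits
      have hterm : ∀ i : Fin m, ((digit p ℓ (Y i) : ZMod p)) =
          if i = i0 then ((digit p ℓ rnew : ZMod p)) else (digit p ℓ (X i) : ZMod p) := by
        intro i
        rw [hYdig_lo ℓ hcase i, hR]
        simp only
        rcases eq_or_ne i i0 with rfl | hne
        · rw [if_pos rfl, if_pos rfl]
        · rw [if_neg hne, if_neg hne, digit_mod_pow hp hcase]
      rw [Finset.sum_congr rfl fun i _ => hterm i,
        ← Finset.add_sum_erase _ _ (Finset.mem_univ i0), if_pos rfl,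
        Finset.sum_congr rfl fun i hi => if_neg (Finset.ne_of_mem_erase hi)]
      rw [hrnew_digit ℓ hcase, ZMod.natCast_mod, hS]
      push_cast
      rw [Nat.cast_sub (by omega : 1 ≤ p)]
      simp only [ZMod.natCast_self, Nat.cast_one]
      ring
    · -- the digit L
      subst hcase
      have hterm : ∀ i : Fin m, ((digit p ℓ (Y i) : ZMod p)) =
          (digit p ℓ (X i) : ZMod p) - (a i : ZMod p) := by
        intro i
        rw [hYdig_L i, Nat.cast_sub (ha_le i)]
      rw [Finset.sum_congr rfl fun i _ => hterm i, Finset.sum_sub_distrib]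
      have h1 : ((∑ i, a i : ℕ) : ZMod p) = ((δ : ℕ) : ZMod p) := by rw [ha_sum]
      rw [Nat.cast_sum] at h1
      have h2 : (digit p ℓ u : ZMod p) = ((∑ i, digit p ℓ (X i)) : ZMod p) - (δ : ZMod p) := by
        have h3 : digit p ℓ u = digit p ℓ s - δ := by omega
        have h4 : (digit p ℓ s : ZMod p) = ((∑ i, digit p ℓ (X i)) : ZMod p) := by
          rw [hdigs ℓ, ZMod.natCast_mod, Nat.cast_sum]
        rw [h3, Nat.cast_sub (by omega), h4]
      rw [h2, h1]
    · -- high digits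
      rw [Finset.sum_congr rfl fun i _ => by rw [hYdig_hi ℓ hcase i]]
      have h4 : (digit p ℓ u : ZMod p) = ((∑ i, digit p ℓ (X i)) : ZMod p) := by
        rw [hhi ℓ hcase, hdigs ℓ, ZMod.natCast_mod, Nat.cast_sum]
      rw [h4]
  refine ⟨Y, ⟨hYle, ?_, ?_, hordc⟩, hfinal⟩
  · rw [hfilter]
    exact hcard1
  · rw [hfilter]
    exact lt_min (by omega) (by omega)

end PartB
/-- Sprague-Grundy value computed with fuel bounding the total number of tokens:
`sgAux (n+1) X` is the minimum excludant of the values of the options of `X`. -/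
noncomputable def sgAux (p k m : ℕ) : ℕ → (Fin m → ℕ) → ℕ
  | 0, _ => 0
  | n + 1, X => sInf {v : ℕ | ∀ Y : Fin m → ℕ, NimMove p k X Y → sgAux p k m n Y ≠ v}

/-- The Sprague-Grundy function of `N^m_{p,k}` (every move strictly decreases the
total number of tokens, so `∑ X i + 1` units of fuel suffice). -/
noncomputable def nimSg (p k : ℕ) {m : ℕ} (X : Fin m → ℕ) : ℕ :=
  sgAux p k m (∑ i, X i + 1) X

lemma sum_lt_of_move {p k m : ℕ} {X Y : Fin m → ℕ} (h : NimMove p k X Y) :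
    ∑ i, Y i < ∑ i, X i := by
  obtain ⟨hle, hpos, -, -⟩ := h
  obtain ⟨i, hi⟩ := Finset.card_pos.1 hpos
  rw [Finset.mem_filter] at hi
  refine Finset.sum_lt_sum (fun j _ => hle j) ⟨i, Finset.mem_univ i, ?_⟩
  have h1 := hle i
  have h2 := hi.2
  omega

lemma sg_key (p m : ℕ) (hp : 1 < p) (hm : 1 ≤ m) :
    ∀ n (X : Fin m → ℕ), ∑ i, X i < n →
      sgAux p (min p (m + 1)) m n X = oplusSum p Finset.univ X := by
  intro n
  induction n with
  | zero => intro X h; omega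
  | succ n ih =>
    intro X hX
    have hopts : ∀ Y : Fin m → ℕ, NimMove p (min p (m + 1)) X Y →
        sgAux p (min p (m + 1)) m n Y = oplusSum p Finset.univ Y := fun Y hY =>
      ih Y (by have := sum_lt_of_move hY; omega)
    show sInf {v : ℕ | ∀ Y : Fin m → ℕ, NimMove p (min p (m + 1)) X Y →
        sgAux p (min p (m + 1)) m n Y ≠ v} = oplusSum p Finset.univ X
    have hmem : oplusSum p Finset.univ X ∈ {v : ℕ | ∀ Y : Fin m → ℕ,
        NimMove p (min p (m + 1)) X Y → sgAux p (min p (m + 1)) m n Y ≠ v} := by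
      intro Y hY
      rw [hopts Y hY]
      exact oplus_ne_of_move hp X Y hY
    refine le_antisymm (Nat.sInf_le hmem) ?_
    by_contra hcon
    push_neg at hcon
    have hmem' := Nat.sInf_mem (⟨_, hmem⟩ : Set.Nonempty _)
    obtain ⟨Y, hY, hYu⟩ := exists_move hp X hcon
    exact hmem' Y hY (by rw [hopts Y hY, hYu])

theorem stmt3 (p m : ℕ) (hp : 1 < p) (hm : 1 ≤ m) (X : Fin m → ℕ) :
    nimSg p (min p (m + 1)) X = oplusSum p Finset.univ X := by
  exact sg_key p m hp hm (∑ i, X i + 1) X (Nat.lt_succ_self _)
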